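/- For all a > 0 and all λ > 0, the integral over (0,∞) of e^{−λx} · (1/(8√π)) x^{−7/2} e^{−a²/(4x)} (a³ − 6ax) dx equals λ e^{−a√λ}. -/

import Mathlib

open MeasureTheory Real Set Filter Topology

-- master pointwise bound: for 0 ≤ k ≤ 4, x^(-k) e^{-c/x} ≤ 257 * c^(-k)
lemma aux_bound (k c x : ℝ) (hk0 : 0 ≤ k) (hk4 : k ≤ 4) (hc : 0 < c) (hx : 0 < x) :
    x ^ (-k) * Real.exp (-(c / x)) ≤ 257 * c ^ (-k) := by
  set u : ℝ := c / x with hu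
  have hu0 : 0 < u := div_pos hc hx
  have hxu : x = c / u := by field_simp [hu]; rw [hu]; field_simp
  have h1 : x ^ (-k) = c ^ (-k) * u ^ k := by
    rw [hxu, div_rpow hc.le hu0.le, Real.rpow_neg hc.le, Real.rpow_neg hu0.le]
    field_simp
  have h2 : u ^ k ≤ u ^ (4:ℕ) + 1 := by
    rcases le_total u 1 with h | h
    · have : u ^ k ≤ 1 := Real.rpow_le_one hu0.le h hk0
      nlinarith [pow_nonneg hu0.le 4]
    · have : u ^ k ≤ u ^ (4:ℝ) := Real.rpow_le_rpow_of_exponent_le h hk4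
      rw [show ((4:ℝ)) = ((4:ℕ):ℝ) by norm_num, Real.rpow_natCast] at this
      linarith
  have h3 : u ^ (4:ℕ) ≤ 256 * Real.exp u := by
    have h4 : u / 4 ≤ Real.exp (u / 4) := by
      have := Real.add_one_le_exp (u / 4); linarith
    have h5 : (u / 4) ^ (4:ℕ) ≤ (Real.exp (u / 4)) ^ (4:ℕ) :=
      pow_le_pow_left₀ (by positivity) h4 4
    rw [← Real.exp_nat_mul] at h5
    have : ((4:ℕ):ℝ) * (u / 4) = u := by push_cast; ring
    rw [this] at h5
    nlinarith [h5]
  have h6 : Real.exp (-u) = (Real.exp u)⁻¹ := Real.exp_neg u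
  have hexp : 0 < Real.exp u := Real.exp_pos u
  have h7 : (u ^ (4:ℕ) + 1) * Real.exp (-u) ≤ 257 := by
    rw [h6, mul_inv_le_iff₀ hexp]
    nlinarith [Real.one_le_exp (le_of_lt hu0), h3]
  have hck : 0 < c ^ (-k) := Real.rpow_pos_of_pos hc _
  calc x ^ (-k) * Real.exp (-(c/x)) = c ^ (-k) * (u ^ k * Real.exp (-u)) := by
        rw [h1]; ring
    _ ≤ c ^ (-k) * ((u ^ (4:ℕ) + 1) * Real.exp (-u)) := by
        apply mul_le_mul_of_nonneg_left _ hck.le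
        exact mul_le_mul_of_nonneg_right h2 (Real.exp_pos _).le
    _ ≤ c ^ (-k) * 257 := mul_le_mul_of_nonneg_left h7 hck.le
    _ = 257 * c ^ (-k) := by ring

lemma cont_aux (k c l : ℝ) :
    ContinuousOn (fun x : ℝ => x ^ (-k) * Real.exp (-(l * x) - c / x)) (Ioi 0) := by
  apply ContinuousOn.mul
  · exact fun x hx => (Real.continuousAt_rpow_const x (-k) (Or.inl (ne_of_gt hx))).continuousWithinAt
  · apply Real.continuous_exp.comp_continuousOn
    have h1 : ContinuousOn (fun x : ℝ => c / x) (Ioi 0) := by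
      apply ContinuousOn.div continuousOn_const continuousOn_id
      exact fun x hx => ne_of_gt hx
    have h2 : ContinuousOn (fun x : ℝ => -(l * x)) (Ioi 0) :=
      (continuous_const.mul continuous_id).neg.continuousOn
    exact h2.sub h1

lemma integrableOn_aux (k c l : ℝ) (hk0 : 0 ≤ k) (hk4 : k ≤ 4) (hc : 0 < c) (hl : 0 < l) :
    IntegrableOn (fun x : ℝ => x ^ (-k) * Real.exp (-(l * x) - c / x)) (Ioi 0) := by
  apply Integrable.mono' (g := fun x => 257 * c ^ (-k) * Real.exp (-l * x))
  · exact ((exp_neg_integrableOn_Ioi 0 hl).const_mul _)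
  · exact (cont_aux k c l).aestronglyMeasurable measurableSet_Ioi
  · filter_upwards [ae_restrict_mem measurableSet_Ioi] with x hx
    have hx0 : (0:ℝ) < x := hx
    have h1 : Real.exp (-(l * x) - c / x) = Real.exp (-(c / x)) * Real.exp (-(l*x)) := by
      rw [← Real.exp_add]; ring_nf
    rw [Real.norm_eq_abs, abs_of_nonneg (by positivity), h1, ← mul_assoc]
    have := aux_bound k c x hk0 hk4 hc hx0
    have he : (0:ℝ) < Real.exp (-(l*x)) := Real.exp_pos _
    calc x ^ (-k) * Real.exp (-(c/x)) * Real.exp (-(l*x))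
        ≤ 257 * c ^ (-k) * Real.exp (-(l*x)) := mul_le_mul_of_nonneg_right this he.le
      _ = 257 * c ^ (-k) * Real.exp (-l * x) := by ring_nf

lemma rpow_half_inv {x : ℝ} (hx : 0 < x) : x ^ (-(1:ℝ)/2) = (Real.sqrt x)⁻¹ := by
  rw [Real.sqrt_eq_rpow, show (-(1:ℝ)/2) = -(1/2) by norm_num, Real.rpow_neg hx.le]

lemma rpow_threehalf_inv {x : ℝ} (hx : 0 < x) : x ^ (-(3:ℝ)/2) = (x * Real.sqrt x)⁻¹ := by
  rw [show (-(3:ℝ)/2) = -(3/2) by norm_num, Real.rpow_neg hx.le]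
  congr 1
  rw [show ((3:ℝ)/2) = 1 + 1/2 by norm_num, Real.rpow_add hx, Real.rpow_one,
    Real.sqrt_eq_rpow]

lemma rpow_sevenhalf_inv {x : ℝ} (hx : 0 < x) : x ^ (-(7:ℝ)/2) = (x ^ 3 * Real.sqrt x)⁻¹ := by
  rw [show (-(7:ℝ)/2) = -(7/2) by norm_num, Real.rpow_neg hx.le]
  congr 1
  rw [show ((7:ℝ)/2) = 3 + 1/2 by norm_num, Real.rpow_add hx, Real.sqrt_eq_rpow,
    show ((3:ℝ)) = ((3:ℕ):ℝ) by norm_num, Real.rpow_natCast]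

lemma rpow_fivehalf_inv {x : ℝ} (hx : 0 < x) : x ^ (-(5:ℝ)/2) = (x ^ 2 * Real.sqrt x)⁻¹ := by
  rw [show (-(5:ℝ)/2) = -(5/2) by norm_num, Real.rpow_neg hx.le]
  congr 1
  rw [show ((5:ℝ)/2) = 2 + 1/2 by norm_num, Real.rpow_add hx, Real.sqrt_eq_rpow,
    show ((2:ℝ)) = ((2:ℕ):ℝ) by norm_num, Real.rpow_natCast]

lemma integrableOn_K (b d : ℝ) (hb : 0 < b) (hd : 0 < d) :
    IntegrableOn (fun x : ℝ => Real.exp (-(b^2*x) - d^2/x) / Real.sqrt x) (Ioi 0) := by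
  apply ((integrableOn_aux (1/2) (d^2) (b^2) (by norm_num) (by norm_num)
    (by positivity) (by positivity)).congr_fun _ measurableSet_Ioi)
  intro x hx
  have hx0 : (0:ℝ) < x := hx
  dsimp only
  rw [show -(1/2 : ℝ) = -(1:ℝ)/2 by norm_num, rpow_half_inv hx0]
  rw [inv_mul_eq_div]

lemma integrableOn_J (b d : ℝ) (hb : 0 < b) (hd : 0 < d) :
    IntegrableOn (fun x : ℝ => Real.exp (-(b^2*x) - d^2/x) / (x * Real.sqrt x)) (Ioi 0) := by
  apply ((integrableOn_aux (3/2) (d^2) (b^2) (by norm_num) (by norm_num)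
    (by positivity) (by positivity)).congr_fun _ measurableSet_Ioi)
  intro x hx
  have hx0 : (0:ℝ) < x := hx
  have hs : 0 < Real.sqrt x := Real.sqrt_pos.2 hx0
  dsimp only
  rw [show -(3/2 : ℝ) = -(3:ℝ)/2 by norm_num, rpow_threehalf_inv hx0]
  rw [inv_mul_eq_div]

lemma phi_deriv (b d : ℝ) {x : ℝ} (hx : 0 < x) :
    HasDerivAt (fun x : ℝ => b * Real.sqrt x - d / Real.sqrt x)
      (b / (2 * Real.sqrt x) + d / (2 * x * Real.sqrt x)) x := by
  have hs : 0 < Real.sqrt x := Real.sqrt_pos.2 hx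
  have h1 : HasDerivAt Real.sqrt (1 / (2 * Real.sqrt x)) x := Real.hasDerivAt_sqrt hx.ne'
  have h2 : HasDerivAt (fun x : ℝ => b * Real.sqrt x) (b * (1 / (2 * Real.sqrt x))) x :=
    h1.const_mul b
  have h3 : HasDerivAt (fun x : ℝ => d / Real.sqrt x)
      (-(1 / (2 * Real.sqrt x)) / (Real.sqrt x)^2 * d) x := by
    simpa [div_eq_mul_inv, mul_comm] using (h1.inv hs.ne').const_mul d
  have h4 := h2.sub h3
  refine h4.congr_deriv (Eq.symm ?_)
  have hsq : (Real.sqrt x)^2 = x := Real.sq_sqrt hx.le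
  field_simp
  rw [hsq]; ring

lemma phi_inj (b d : ℝ) (hb : 0 < b) (hd : 0 < d) :
    InjOn (fun x : ℝ => b * Real.sqrt x - d / Real.sqrt x) (Ioi 0) := by
  intro x hx y hy h
  have hx0 : (0:ℝ) < x := hx
  have hy0 : (0:ℝ) < y := hy
  have hsx : 0 < Real.sqrt x := Real.sqrt_pos.2 hx0
  have hsy : 0 < Real.sqrt y := Real.sqrt_pos.2 hy0
  dsimp at h
  have key : Real.sqrt x = Real.sqrt y := by
    have h' : (Real.sqrt x - Real.sqrt y) * (b * (Real.sqrt x * Real.sqrt y) + d) = 0 := by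
      have := h
      field_simp at this
      nlinarith [this]
    have hpos : 0 < b * (Real.sqrt x * Real.sqrt y) + d := by positivity
    have := mul_eq_zero.1 h'
    rcases this with h'' | h''
    · linarith
    · linarith
  calc x = (Real.sqrt x)^2 := (Real.sq_sqrt hx0.le).symm
    _ = (Real.sqrt y)^2 := by rw [key]
    _ = y := Real.sq_sqrt hy0.le

lemma phi_surj (b d : ℝ) (hb : 0 < b) (hd : 0 < d) :
    (fun x : ℝ => b * Real.sqrt x - d / Real.sqrt x) '' (Ioi 0) = univ := by
  apply eq_univ_of_forall
  intro u
  set s : ℝ := Real.sqrt (u^2 + 4*b*d) with hs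
  have hs2 : s^2 = u^2 + 4*b*d := Real.sq_sqrt (by nlinarith)
  have hsu : -u < s := by
    nlinarith [Real.sqrt_nonneg (u^2+4*b*d), hs2]
  set t : ℝ := (u + s) / (2*b) with ht
  have ht0 : 0 < t := by
    apply div_pos _ (by linarith)
    linarith
  refine ⟨t^2, mem_Ioi.2 (by positivity), ?_⟩
  have hst : Real.sqrt (t^2) = t := Real.sqrt_sq ht0.le
  dsimp only
  rw [hst]
  have hbt : b * t^2 = u * t + d := by
    rw [ht]
    field_simp
    nlinarith [hs2]
  field_simp
  nlinarith [hbt]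

lemma eq1 (b d : ℝ) (hb : 0 < b) (hd : 0 < d) :
    b * (∫ x in Ioi (0:ℝ), Real.exp (-(b^2*x) - d^2/x) / Real.sqrt x)
      + d * (∫ x in Ioi (0:ℝ), Real.exp (-(b^2*x) - d^2/x) / (x * Real.sqrt x))
      = 2 * Real.sqrt Real.pi * Real.exp (-(2*b*d)) := by
  set φ : ℝ → ℝ := fun x => b * Real.sqrt x - d / Real.sqrt x with hφ
  set φ' : ℝ → ℝ := fun x => b / (2 * Real.sqrt x) + d / (2 * x * Real.sqrt x) with hφ'
  have hderiv : ∀ x ∈ Ioi (0:ℝ), HasDerivWithinAt φ (φ' x) (Ioi 0) x :=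
    fun x hx => (phi_deriv b d hx).hasDerivWithinAt
  have key := integral_image_eq_integral_abs_deriv_smul measurableSet_Ioi hderiv
    (phi_inj b d hb hd) (fun u => Real.exp (-u^2))
  rw [phi_surj b d hb hd] at key
  have hgauss : (∫ x in (univ : Set ℝ), Real.exp (-x^2)) = Real.sqrt Real.pi := by
    rw [Measure.restrict_univ]
    have := integral_gaussian 1
    simpa using this
  rw [hgauss] at key
  -- rewrite RHS pointwise
  have hpt : ∀ x ∈ Ioi (0:ℝ), |φ' x| • Real.exp (-(φ x)^2)
      = Real.exp (2*b*d) * ((b/2) * (Real.exp (-(b^2*x) - d^2/x) / Real.sqrt x)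
        + (d/2) * (Real.exp (-(b^2*x) - d^2/x) / (x * Real.sqrt x))) := by
    intro x hx
    have hx0 : (0:ℝ) < x := hx
    have hs : 0 < Real.sqrt x := Real.sqrt_pos.2 hx0
    have hsq : (Real.sqrt x)^2 = x := Real.sq_sqrt hx0.le
    have habs : |φ' x| = φ' x := abs_of_pos (by
      have : 0 < b / (2 * Real.sqrt x) := by positivity
      have : 0 < d / (2 * x * Real.sqrt x) := by positivity
      simp only [hφ']
      positivity)
    have hss : Real.sqrt x * Real.sqrt x = x := Real.mul_self_sqrt hx0.le
    have hsq2 : (φ x)^2 = b^2*x + d^2/x - 2*b*d := by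
      simp only [hφ]
      field_simp
      rw [hsq]; ring
    rw [habs, smul_eq_mul, hsq2]
    have hexp : Real.exp (-(b^2*x + d^2/x - 2*b*d))
        = Real.exp (2*b*d) * Real.exp (-(b^2*x) - d^2/x) := by
      rw [← Real.exp_add]; ring_nf
    rw [hexp]
    simp only [hφ']
    field_simp
  rw [setIntegral_congr_fun measurableSet_Ioi hpt] at key
  have hK := integrableOn_K b d hb hd
  have hJ := integrableOn_J b d hb hd
  rw [MeasureTheory.integral_const_mul] at key
  rw [integral_add ((hK.const_mul _)) ((hJ.const_mul _))] at key
  rw [MeasureTheory.integral_const_mul, MeasureTheory.integral_const_mul] at key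
  have hE : Real.exp (2*b*d) ≠ 0 := (Real.exp_pos _).ne'
  have hE2 : Real.exp (-(2*b*d)) = (Real.exp (2*b*d))⁻¹ := Real.exp_neg _
  rw [hE2]
  generalize (∫ x in Ioi (0:ℝ), Real.exp (-(b^2*x) - d^2/x) / Real.sqrt x) = K at key ⊢
  generalize (∫ x in Ioi (0:ℝ), Real.exp (-(b^2*x) - d^2/x) / (x * Real.sqrt x)) = J at key ⊢
  rw [key, eq_mul_inv_iff_mul_eq₀ hE]
  ring

lemma eq2 (b d : ℝ) (hb : 0 < b) (hd : 0 < d) :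
    d * (∫ x in Ioi (0:ℝ), Real.exp (-(b^2*x) - d^2/x) / (x * Real.sqrt x))
      = b * (∫ x in Ioi (0:ℝ), Real.exp (-(b^2*x) - d^2/x) / Real.sqrt x) := by
  set ψ : ℝ → ℝ := fun x => d^2 / (b^2 * x) with hψ
  set ψ' : ℝ → ℝ := fun x => -(d^2) / (b^2 * x^2) with hψ'
  have hderiv : ∀ x ∈ Ioi (0:ℝ), HasDerivWithinAt ψ (ψ' x) (Ioi 0) x := by
    intro x hx
    have hx0 : (0:ℝ) < x := hx
    have h1 : HasDerivAt (fun x : ℝ => b^2 * x) (b^2) x := by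
      simpa using (hasDerivAt_id x).const_mul (b^2)
    have h2 := (h1.inv (by positivity)).const_mul (d^2)
    have : HasDerivAt ψ (d^2 * (-(b^2) / (b^2*x)^2)) x := by
      simpa [hψ, div_eq_mul_inv] using h2
    refine this.hasDerivWithinAt.congr_deriv (Eq.symm ?_)
    simp only [hψ']
    field_simp
  have hinj : InjOn ψ (Ioi 0) := by
    intro x hx y hy h
    have hx0 : (0:ℝ) < x := hx
    have hy0 : (0:ℝ) < y := hy
    simp only [hψ] at h
    field_simp at h
    nlinarith [h]
  have himg : ψ '' (Ioi 0) = Ioi 0 := by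
    apply Subset.antisymm
    · rintro _ ⟨x, hx, rfl⟩
      have hx0 : (0:ℝ) < x := hx
      exact mem_Ioi.2 (by positivity)
    · intro y hy
      have hy0 : (0:ℝ) < y := hy
      refine ⟨d^2 / (b^2 * y), mem_Ioi.2 (by positivity), ?_⟩
      simp only [hψ]
      field_simp
  have key := integral_image_eq_integral_abs_deriv_smul measurableSet_Ioi hderiv hinj
    (fun u => Real.exp (-(b^2*u) - d^2/u) / (u * Real.sqrt u))
  rw [himg] at key
  have hpt : ∀ x ∈ Ioi (0:ℝ), |ψ' x| • (Real.exp (-(b^2*(ψ x)) - d^2/(ψ x)) / (ψ x * Real.sqrt (ψ x)))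
      = (b/d) * (Real.exp (-(b^2*x) - d^2/x) / Real.sqrt x) := by
    intro x hx
    have hx0 : (0:ℝ) < x := hx
    have hs : 0 < Real.sqrt x := Real.sqrt_pos.2 hx0
    have hss : Real.sqrt x * Real.sqrt x = x := Real.mul_self_sqrt hx0.le
    have habs : |ψ' x| = d^2 / (b^2 * x^2) := by
      simp only [hψ']
      rw [abs_div, abs_neg, abs_of_nonneg (by positivity), abs_of_nonneg (by positivity)]
    have hψx : ψ x = d^2 / (b^2 * x) := rfl
    have hsψ : Real.sqrt (ψ x) = d / (b * Real.sqrt x) := by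
      rw [hψx, Real.sqrt_div (by positivity), Real.sqrt_sq hd.le,
        Real.sqrt_mul (by positivity) x, Real.sqrt_sq hb.le]
    have hexp : (-(b^2*(ψ x)) - d^2/(ψ x)) = (-(b^2*x) - d^2/x) := by
      rw [hψx]
      field_simp
      ring
    rw [habs, smul_eq_mul, hexp, hψx, hsψ]
    field_simp
    ring_nf
    rw [Real.sq_sqrt hx0.le]
  rw [setIntegral_congr_fun measurableSet_Ioi hpt, MeasureTheory.integral_const_mul] at key
  rw [key]
  field_simp

lemma Jval (b d : ℝ) (hb : 0 < b) (hd : 0 < d) :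
    ∫ x in Ioi (0:ℝ), Real.exp (-(b^2*x) - d^2/x) / (x * Real.sqrt x)
      = Real.sqrt Real.pi / d * Real.exp (-(2*b*d)) := by
  have h1 := eq1 b d hb hd
  have h2 := eq2 b d hb hd
  have : 2 * d * (∫ x in Ioi (0:ℝ), Real.exp (-(b^2*x) - d^2/x) / (x * Real.sqrt x))
      = 2 * Real.sqrt Real.pi * Real.exp (-(2*b*d)) := by linarith
  field_simp at this ⊢
  linarith

lemma laplace_f (a l : ℝ) (ha : 0 < a) (hl : 0 < l) :
    ∫ x in Ioi (0:ℝ), Real.exp (-l * x) *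
      (a / (2 * Real.sqrt Real.pi) * x ^ (-(3:ℝ)/2) * Real.exp (-a ^ 2 / (4 * x)))
      = Real.exp (-a * Real.sqrt l) := by
  have hπ : 0 < Real.sqrt Real.pi := Real.sqrt_pos.2 Real.pi_pos
  set b : ℝ := Real.sqrt l with hbdef
  have hb : 0 < b := Real.sqrt_pos.2 hl
  have hb2 : b^2 = l := Real.sq_sqrt hl.le
  have hd : 0 < a/2 := by linarith
  have hpt : ∀ x ∈ Ioi (0:ℝ), Real.exp (-l * x) *
      (a / (2 * Real.sqrt Real.pi) * x ^ (-(3:ℝ)/2) * Real.exp (-a ^ 2 / (4 * x)))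
      = (a / (2 * Real.sqrt Real.pi)) *
        (Real.exp (-(b^2*x) - (a/2)^2/x) / (x * Real.sqrt x)) := by
    intro x hx
    have hx0 : (0:ℝ) < x := hx
    rw [rpow_threehalf_inv hx0, hb2]
    have harg : -(l*x) - (a/2)^2/x = (-l * x) + (-a ^ 2 / (4 * x)) := by
      field_simp
      ring
    rw [harg, Real.exp_add]
    field_simp
  rw [setIntegral_congr_fun measurableSet_Ioi hpt, MeasureTheory.integral_const_mul,
    Jval b (a/2) hb hd]
  rw [show -(2*b*(a/2)) = -a * Real.sqrt l by rw [hbdef]; ring]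
  rw [hbdef]
  field_simp

lemma f_deriv (a l : ℝ) (ha : 0 < a) {x : ℝ} (hx : 0 < x) :
    HasDerivAt (fun x : ℝ => Real.exp (-l * x) *
        (a / (2 * Real.sqrt Real.pi) * x ^ (-(3:ℝ)/2) * Real.exp (-a ^ 2 / (4 * x))))
      (Real.exp (-l * x) *
        (1 / (8 * Real.sqrt Real.pi) * x ^ (-(7:ℝ)/2) * Real.exp (-a ^ 2 / (4 * x)) *
          (a ^ 3 - 6 * a * x))
        - l * (Real.exp (-l * x) *
        (a / (2 * Real.sqrt Real.pi) * x ^ (-(3:ℝ)/2) * Real.exp (-a ^ 2 / (4 * x))))) x := by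
  have hπ : 0 < Real.sqrt Real.pi := Real.sqrt_pos.2 Real.pi_pos
  have hs : 0 < Real.sqrt x := Real.sqrt_pos.2 hx
  have hss : Real.sqrt x * Real.sqrt x = x := Real.mul_self_sqrt hx.le
  have h1 : HasDerivAt (fun x : ℝ => -l * x) (-l) x := by
    simpa using (hasDerivAt_id x).const_mul (-l)
  have hE1 : HasDerivAt (fun x : ℝ => Real.exp (-l * x)) (Real.exp (-l * x) * (-l)) x := h1.exp
  have h2 : HasDerivAt (fun y : ℝ => y ^ (-(3:ℝ)/2)) ((-(3:ℝ)/2) * x ^ (-(3:ℝ)/2 - 1)) x :=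
    Real.hasDerivAt_rpow_const (Or.inl hx.ne')
  have h3 : HasDerivAt (fun y : ℝ => -a ^ 2 / (4 * y)) (a^2 / (4 * x^2)) x := by
    have h3' : HasDerivAt (fun y : ℝ => (-a^2/4) * y⁻¹) ((-a^2/4) * (-(x^2)⁻¹)) x :=
      (hasDerivAt_inv hx.ne').const_mul _
    have heq : (fun y : ℝ => (-a^2/4) * y⁻¹) = (fun y : ℝ => -a ^ 2 / (4 * y)) := by
      funext y
      rw [← div_div, div_eq_mul_inv, div_eq_mul_inv]
    rw [heq] at h3'
    convert h3' using 1
    field_simp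
  have hE3 : HasDerivAt (fun y : ℝ => Real.exp (-a ^ 2 / (4 * y)))
      (Real.exp (-a ^ 2 / (4 * x)) * (a^2 / (4 * x^2))) x := h3.exp
  have hmid : HasDerivAt (fun y : ℝ => a / (2 * Real.sqrt Real.pi) * y ^ (-(3:ℝ)/2) *
      Real.exp (-a ^ 2 / (4 * y)))
      ((a / (2 * Real.sqrt Real.pi) * ((-(3:ℝ)/2) * x ^ (-(3:ℝ)/2 - 1))) *
          Real.exp (-a ^ 2 / (4 * x))
        + (a / (2 * Real.sqrt Real.pi) * x ^ (-(3:ℝ)/2)) *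
          (Real.exp (-a ^ 2 / (4 * x)) * (a^2 / (4 * x^2)))) x :=
    (h2.const_mul (a / (2 * Real.sqrt Real.pi))).mul hE3
  have htot := hE1.mul hmid
  refine htot.congr_deriv (Eq.symm ?_)
  rw [show (-(3:ℝ)/2 - 1) = -(5:ℝ)/2 by norm_num]
  rw [rpow_threehalf_inv hx, rpow_fivehalf_inv hx, rpow_sevenhalf_inv hx]
  field_simp
  ring_nf

lemma integrableOn_f (a l : ℝ) (ha : 0 < a) (hl : 0 < l) :
    IntegrableOn (fun x : ℝ => Real.exp (-l * x) *
      (a / (2 * Real.sqrt Real.pi) * x ^ (-(3:ℝ)/2) * Real.exp (-a ^ 2 / (4 * x)))) (Ioi 0) := by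
  apply MeasureTheory.IntegrableOn.congr_fun
    ((integrableOn_aux (3/2) (a^2/4) l (by norm_num) (by norm_num) (by positivity) hl
    ).const_mul (a / (2 * Real.sqrt Real.pi))) _ measurableSet_Ioi
  intro x hx
  have hx0 : (0:ℝ) < x := hx
  dsimp only
  have harg : -(l * x) - (a^2/4) / x = (-l * x) + (-a ^ 2 / (4 * x)) := by
    field_simp; ring
  rw [harg, Real.exp_add, show -(3/2 : ℝ) = -(3:ℝ)/2 by norm_num]
  ring

lemma integrableOn_g (a l : ℝ) (ha : 0 < a) (hl : 0 < l) :
    IntegrableOn (fun x : ℝ => Real.exp (-l * x) *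
      (1 / (8 * Real.sqrt Real.pi) * x ^ (-(7:ℝ)/2) * Real.exp (-a ^ 2 / (4 * x)) *
        (a ^ 3 - 6 * a * x))) (Ioi 0) := by
  have h1 := (integrableOn_aux (7/2) (a^2/4) l (by norm_num) (by norm_num)
    (by positivity) hl).const_mul (a^3 / (8 * Real.sqrt Real.pi))
  have h2 := (integrableOn_aux (5/2) (a^2/4) l (by norm_num) (by norm_num)
    (by positivity) hl).const_mul (6*a / (8 * Real.sqrt Real.pi))
  apply MeasureTheory.IntegrableOn.congr_fun (h1.sub h2) _ measurableSet_Ioi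
  intro x hx
  have hx0 : (0:ℝ) < x := hx
  have hs : 0 < Real.sqrt x := Real.sqrt_pos.2 hx0
  have hss : Real.sqrt x * Real.sqrt x = x := Real.mul_self_sqrt hx0.le
  simp only [Pi.sub_apply]
  have harg : -(l * x) - (a^2/4) / x = (-l * x) + (-a ^ 2 / (4 * x)) := by
    field_simp; ring
  rw [harg, Real.exp_add, show -(7/2 : ℝ) = -(7:ℝ)/2 by norm_num,
    show -(5/2 : ℝ) = -(5:ℝ)/2 by norm_num, rpow_sevenhalf_inv hx0, rpow_fivehalf_inv hx0]
  field_simp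

/-- For `a > 0` and `λ > 0`, the Laplace transform of
`g_a(x) = (1/(8√π)) x^{-7/2} e^{-a²/(4x)} (a³ - 6ax)` is `λ e^{-a√λ}`. -/
theorem laplace_ga (a l : ℝ) (ha : 0 < a) (hl : 0 < l) :
    ∫ x in Set.Ioi (0 : ℝ),
      Real.exp (-l * x) *
        (1 / (8 * Real.sqrt Real.pi) * x ^ (-(7 : ℝ) / 2) * Real.exp (-a ^ 2 / (4 * x)) *
          (a ^ 3 - 6 * a * x))
      = l * Real.exp (-a * Real.sqrt l) := by
  have hπ : 0 < Real.sqrt Real.pi := Real.sqrt_pos.2 Real.pi_pos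
  set f : ℝ → ℝ := fun x => Real.exp (-l * x) *
      (a / (2 * Real.sqrt Real.pi) * x ^ (-(3:ℝ)/2) * Real.exp (-a ^ 2 / (4 * x))) with hfdef
  set g : ℝ → ℝ := fun x => Real.exp (-l * x) *
      (1 / (8 * Real.sqrt Real.pi) * x ^ (-(7:ℝ)/2) * Real.exp (-a ^ 2 / (4 * x)) *
        (a ^ 3 - 6 * a * x)) with hgdef
  set F : ℝ → ℝ := fun x => if x ≤ 0 then 0 else f x with hFdef
  have hint_f : IntegrableOn f (Ioi 0) := integrableOn_f a l ha hl
  have hint_g : IntegrableOn g (Ioi 0) := integrableOn_g a l ha hl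
  -- pointwise bound for f, used for both limits
  have hfpos : ∀ x : ℝ, 0 < x → 0 ≤ f x := by
    intro x hx
    have : 0 < x ^ (-(3:ℝ)/2) := Real.rpow_pos_of_pos hx _
    simp only [hfdef]
    positivity
  have hfbound : ∀ x : ℝ, 0 < x →
      f x ≤ (a / (2 * Real.sqrt Real.pi)) * (257 * (a^2/4) ^ (-(2:ℝ))) * Real.sqrt x
        * Real.exp (-l * x) := by
    intro x hx
    have hs : 0 < Real.sqrt x := Real.sqrt_pos.2 hx
    have hss : Real.sqrt x * Real.sqrt x = x := Real.mul_self_sqrt hx.le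
    have hb := aux_bound 2 (a^2/4) x (by norm_num) (by norm_num) (by positivity) hx
    have h2 : x ^ (-(2:ℝ)) = (x^2)⁻¹ := by
      rw [show (-(2:ℝ)) = -((2:ℕ):ℝ) by norm_num, Real.rpow_neg hx.le, Real.rpow_natCast]
    rw [h2] at hb
    have hcx : -(a^2/4/x) = -a^2/(4*x) := by rw [div_div]; ring
    rw [hcx] at hb
    -- f x = C * exp(-l x) * (x^{-3/2} e^{-a²/4x})
    simp only [hfdef]
    rw [rpow_threehalf_inv hx]
    have hkey : (x * Real.sqrt x)⁻¹ * Real.exp (-a^2/(4*x))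
        ≤ Real.sqrt x * (257 * (a^2/4) ^ (-(2:ℝ))) := by
      have hrw : (x * Real.sqrt x)⁻¹ = Real.sqrt x * (x^2)⁻¹ := by
        rw [eq_comm, mul_inv_eq_iff_eq_mul₀ (by positivity)]
        field_simp
        nlinarith [hss]
      rw [hrw]
      calc Real.sqrt x * (x^2)⁻¹ * Real.exp (-a^2/(4*x))
          = Real.sqrt x * ((x^2)⁻¹ * Real.exp (-a^2/(4*x))) := by ring
        _ ≤ Real.sqrt x * (257 * (a^2/4) ^ (-(2:ℝ))) :=
            mul_le_mul_of_nonneg_left hb hs.le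
    calc Real.exp (-l * x) * (a / (2 * Real.sqrt Real.pi) * (x * Real.sqrt x)⁻¹
          * Real.exp (-a ^ 2 / (4 * x)))
        = (a / (2 * Real.sqrt Real.pi)) * ((x * Real.sqrt x)⁻¹ * Real.exp (-a^2/(4*x)))
          * Real.exp (-l * x) := by ring_nf
      _ ≤ (a / (2 * Real.sqrt Real.pi)) * (Real.sqrt x * (257 * (a^2/4) ^ (-(2:ℝ))))
          * Real.exp (-l * x) := by
          apply mul_le_mul_of_nonneg_right _ (Real.exp_pos _).le
          exact mul_le_mul_of_nonneg_left hkey (by positivity)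
      _ = (a / (2 * Real.sqrt Real.pi)) * (257 * (a^2/4) ^ (-(2:ℝ))) * Real.sqrt x
          * Real.exp (-l * x) := by ring
  set M : ℝ := (a / (2 * Real.sqrt Real.pi)) * (257 * (a^2/4) ^ (-(2:ℝ))) with hM
  have hM0 : 0 ≤ M := by positivity
  have hF0 : F 0 = 0 := by simp [hFdef]
  have hcont : ContinuousWithinAt F (Ici 0) 0 := by
    rw [ContinuousWithinAt, hF0]
    apply squeeze_zero' (g := fun y => M * Real.sqrt y)
    · filter_upwards [self_mem_nhdsWithin] with y _
      by_cases hy0 : y ≤ 0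
      · simp [hFdef, hy0]
      · simp only [hFdef, if_neg hy0]
        exact hfpos y (not_le.1 hy0)
    · filter_upwards [self_mem_nhdsWithin] with y _
      by_cases hy0 : y ≤ 0
      · simp only [hFdef, if_pos hy0]
        positivity
      · have hy : (0:ℝ) < y := not_le.1 hy0
        simp only [hFdef, if_neg hy0]
        calc f y ≤ M * Real.sqrt y * Real.exp (-l * y) := hfbound y hy
          _ ≤ M * Real.sqrt y * 1 := by
              apply mul_le_mul_of_nonneg_left _ (by positivity)
              exact Real.exp_le_one_iff.2 (by nlinarith)
          _ = M * Real.sqrt y := by ring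
    · have h1 : Tendsto (fun y : ℝ => M * Real.sqrt y) (𝓝 0) (𝓝 (M * Real.sqrt 0)) :=
        (continuous_const.mul Real.continuous_sqrt).tendsto 0
      rw [Real.sqrt_zero, mul_zero] at h1
      exact h1.mono_left nhdsWithin_le_nhds
  have htop : Tendsto F atTop (𝓝 0) := by
    set M' : ℝ := (a / (2 * Real.sqrt Real.pi)) * (257 * (a^2/4) ^ (-(3/2:ℝ))) with hM'
    apply squeeze_zero' (g := fun y => M' * Real.exp (-l * y))
    · filter_upwards [Ioi_mem_atTop (0:ℝ)] with y hy
      simp only [hFdef, if_neg (not_le.2 (mem_Ioi.1 hy))]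
      exact hfpos y (mem_Ioi.1 hy)
    · filter_upwards [Ioi_mem_atTop (0:ℝ)] with y hy
      have hy0 : (0:ℝ) < y := mem_Ioi.1 hy
      simp only [hFdef, if_neg (not_le.2 hy0)]
      have hb := aux_bound (3/2) (a^2/4) y (by norm_num) (by norm_num) (by positivity) hy0
      have hcx : -(a^2/4/y) = -a^2/(4*y) := by rw [div_div]; ring
      rw [hcx] at hb
      simp only [hfdef]
      calc Real.exp (-l * y) * (a / (2 * Real.sqrt Real.pi) * y ^ (-(3:ℝ)/2)
            * Real.exp (-a ^ 2 / (4 * y)))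
          = (a / (2 * Real.sqrt Real.pi)) * (y ^ (-(3/2:ℝ)) * Real.exp (-a^2/(4*y)))
            * Real.exp (-l * y) := by
            rw [show (-(3:ℝ)/2) = -(3/2:ℝ) by norm_num]; ring
        _ ≤ (a / (2 * Real.sqrt Real.pi)) * (257 * (a^2/4) ^ (-(3/2:ℝ)))
            * Real.exp (-l * y) := by
            apply mul_le_mul_of_nonneg_right _ (Real.exp_pos _).le
            exact mul_le_mul_of_nonneg_left hb (by positivity)
        _ = M' * Real.exp (-l * y) := rfl
    · have h1 : Tendsto (fun y : ℝ => -l * y) atTop atBot :=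
        tendsto_id.const_mul_atTop_of_neg (neg_lt_zero.2 hl)
      have h2 : Tendsto (fun y : ℝ => Real.exp (-l * y)) atTop (𝓝 0) :=
        Real.tendsto_exp_atBot.comp h1
      have h3 := h2.const_mul M'
      rw [mul_zero] at h3
      exact h3
  have hderiv : ∀ x ∈ Ioi (0:ℝ), HasDerivAt F (g x - l * f x) x := by
    intro x hx
    have hx0 : (0:ℝ) < x := hx
    have hd := f_deriv a l ha hx0
    have hev : F =ᶠ[𝓝 x] f := by
      filter_upwards [isOpen_Ioi.mem_nhds hx] with y hy
      simp [hFdef, not_le.2 (mem_Ioi.1 hy)]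
    exact hd.congr_of_eventuallyEq hev
  have hFTC := integral_Ioi_of_hasDerivAt_of_tendsto hcont hderiv
    (hint_g.sub (hint_f.const_mul l)) htop
  rw [hF0, sub_zero] at hFTC
  rw [integral_sub hint_g (hint_f.const_mul l), MeasureTheory.integral_const_mul] at hFTC
  have hlap : (∫ x in Ioi (0:ℝ), f x) = Real.exp (-a * Real.sqrt l) := laplace_f a l ha hl
  rw [hlap] at hFTC
  show (∫ x in Ioi (0:ℝ), g x) = l * Real.exp (-a * Real.sqrt l)
  linarith
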